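/- Let R → S be a flat ring homomorphism and E a left R-module with a finite decreasing filtration F and a second finite decreasing filtration G. Then F and G are n-opposed on E (i.e., E = F^p E ⊕ G^{q+1} E for all p+q = n) if and only if the induced filtrations S ⊗_R F and S ⊗_R G are n-opposed on S ⊗_R E, provided S is faithfully flat over R. -/

import Mathlib

open TensorProduct

section Aux

variable {R : Type*} [CommRing R] {E : Type*} [AddCommGroup E] [Module R E]

/-- Two submodules are complementary iff the sum map `p × q → E` is bijective. -/
lemma isCompl_iff_bijective_coprod (p q : Submodule R E) :
    IsCompl p q ↔ Function.Bijective ⇑(p.subtype.coprod q.subtype) := by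
  constructor
  · intro h
    have h1 : ⇑(p.subtype.coprod q.subtype) = ⇑(Submodule.prodEquivOfIsCompl p q h) := by
      rw [← Submodule.coe_prodEquivOfIsCompl p q h]; rfl
    rw [h1]
    exact (Submodule.prodEquivOfIsCompl p q h).bijective
  · intro h
    constructor
    · rw [Submodule.disjoint_def]
      intro x hxp hxq
      have h0 : (p.subtype.coprod q.subtype) (⟨x, hxp⟩, ⟨-x, neg_mem hxq⟩) =
          (p.subtype.coprod q.subtype) (0, 0) := by
        simp
      have h2 : (⟨x, hxp⟩ : p) = 0 := congrArg Prod.fst (h.1 h0)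
      simpa [Subtype.ext_iff] using h2
    · rw [codisjoint_iff, ← Submodule.range_subtype p, ← Submodule.range_subtype q,
        ← LinearMap.range_coprod, LinearMap.range_eq_top]
      exact h.2

variable (S : Type*) [CommRing S] [Algebra R S]

lemma range_baseChange_subtype [Module.Flat R S] (p : Submodule R E) :
    LinearMap.range (p.subtype.baseChange S) = p.baseChange S := by
  apply le_antisymm
  · rintro _ ⟨x, rfl⟩
    induction x using TensorProduct.induction_on with
    | zero => simp
    | tmul s m =>
        rw [LinearMap.baseChange_tmul]
        exact Submodule.tmul_mem_baseChange_of_mem s m.2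
    | add x y hx hy => rw [map_add]; exact Submodule.add_mem _ hx hy
  · rw [Submodule.baseChange]

lemma coe_baseChange' {M N : Type*} [AddCommGroup M] [Module R M] [AddCommGroup N] [Module R N]
    (f : M →ₗ[R] N) : ⇑(f.baseChange S) = ⇑(f.lTensor S) :=
  LinearMap.baseChange_eq_ltensor f

/-- Faithfully flat base change preserves and reflects bijectivity. -/
lemma bijective_baseChange_iff [Module.FaithfullyFlat R S]
    {M N : Type*} [AddCommGroup M] [Module R M] [AddCommGroup N] [Module R N]
    (f : M →ₗ[R] N) :
    Function.Bijective f ↔ Function.Bijective ⇑(f.baseChange S) := by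
  constructor
  · intro hf
    rw [coe_baseChange']
    exact ⟨Module.Flat.lTensor_preserves_injective_linearMap f hf.1,
      LinearMap.lTensor_surjective S hf.2⟩
  · intro hf
    constructor
    · -- reflect injectivity
      have hcomp : f ∘ₗ (LinearMap.ker f).subtype = 0 := by
        ext x; exact x.2
      have hbc : (LinearMap.ker f).subtype.lTensor S = 0 := by
        refine LinearMap.ext fun x => ?_
        apply hf.1
        have h1 : f.lTensor S ((LinearMap.ker f).subtype.lTensor S x) = 0 := by
          rw [← LinearMap.comp_apply, ← LinearMap.lTensor_comp, hcomp, LinearMap.lTensor_zero]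
          rfl
        simp only [coe_baseChange']
        simpa using h1
      have hker : (LinearMap.ker f).subtype = 0 :=
        (Module.FaithfullyFlat.zero_iff_lTensor_zero R S _).mpr hbc
      rw [← LinearMap.ker_eq_bot, Submodule.eq_bot_iff]
      intro x hx
      have : (LinearMap.ker f).subtype ⟨x, hx⟩ = 0 := by rw [hker]; rfl
      simpa using this
    · -- reflect surjectivity
      have hcomp : (LinearMap.range f).mkQ ∘ₗ f = 0 := by
        ext x; simp [Submodule.Quotient.mk_eq_zero]
      have hbc : (LinearMap.range f).mkQ.lTensor S = 0 := by
        refine LinearMap.ext fun y => ?_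
        obtain ⟨x, hx⟩ := hf.2 y
        have h1 : (LinearMap.range f).mkQ.lTensor S (f.lTensor S x) = 0 := by
          rw [← LinearMap.comp_apply, ← LinearMap.lTensor_comp, hcomp, LinearMap.lTensor_zero]
          rfl
        have hxy : f.lTensor S x = y := by rw [← coe_baseChange']; exact hx
        rw [hxy] at h1
        simpa using h1
      have hmkQ : (LinearMap.range f).mkQ = 0 :=
        (Module.FaithfullyFlat.zero_iff_lTensor_zero R S _).mpr hbc
      rw [← LinearMap.range_eq_top, ← Submodule.ker_mkQ (LinearMap.range f), hmkQ]
      exact LinearMap.ker_zero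

/-- The base change of the coprod of inclusions computes the coprod of inclusions of
base-changed submodules. -/
lemma bijective_baseChange_coprod_iff [Module.Flat R S] (p q : Submodule R E) :
    Function.Bijective ⇑((p.subtype.coprod q.subtype).baseChange S) ↔
      Function.Bijective ⇑((p.baseChange S).subtype.coprod (q.baseChange S).subtype) := by
  set f := p.subtype.coprod q.subtype with hf
  set g := (p.baseChange S).subtype.coprod (q.baseChange S).subtype with hg
  have hp : Function.Injective ⇑(p.subtype.baseChange S) := by
    rw [coe_baseChange']
    exact Module.Flat.lTensor_preserves_injective_linearMap _ p.injective_subtype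
  have hq : Function.Injective ⇑(q.subtype.baseChange S) := by
    rw [coe_baseChange']
    exact Module.Flat.lTensor_preserves_injective_linearMap _ q.injective_subtype
  let ep : (S ⊗[R] p) ≃ₗ[S] (p.baseChange S) :=
    (LinearEquiv.ofInjective _ hp).trans (LinearEquiv.ofEq _ _ (range_baseChange_subtype S p))
  let eq' : (S ⊗[R] q) ≃ₗ[S] (q.baseChange S) :=
    (LinearEquiv.ofInjective _ hq).trans (LinearEquiv.ofEq _ _ (range_baseChange_subtype S q))
  have hep : ∀ x : S ⊗[R] p, (ep x : S ⊗[R] E) = p.subtype.baseChange S x := fun x => rfl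
  have heq : ∀ x : S ⊗[R] q, (eq' x : S ⊗[R] E) = q.subtype.baseChange S x := fun x => rfl
  have key : ((f.baseChange S).restrictScalars R)
      = ((g ∘ₗ (ep.toLinearMap.prodMap eq'.toLinearMap)).restrictScalars R)
          ∘ₗ (TensorProduct.prodRight R S S ↥p ↥q).toLinearMap := by
    apply TensorProduct.ext'
    intro s m
    simp only [LinearMap.coe_comp, LinearMap.coe_restrictScalars, Function.comp_apply,
      LinearEquiv.coe_coe, TensorProduct.prodRight_tmul, LinearMap.baseChange_tmul,
      LinearMap.prodMap_apply]
    show s ⊗ₜ[R] (f m) = ((ep (s ⊗ₜ m.1) : S ⊗[R] E) + (eq' (s ⊗ₜ m.2) : S ⊗[R] E))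
    rw [hep, heq]
    show s ⊗ₜ[R] ((m.1 : E) + (m.2 : E)) = _
    rw [TensorProduct.tmul_add]
    rfl
  have keyfun : ⇑(f.baseChange S)
      = ⇑g ∘ (Prod.map ⇑ep ⇑eq') ∘ ⇑(TensorProduct.prodRight R S S ↥p ↥q) := by
    funext x
    have h1 := LinearMap.congr_fun key x
    simpa [Prod.map] using h1
  have hbij : Function.Bijective ((Prod.map ⇑ep ⇑eq') ∘ ⇑(TensorProduct.prodRight R S S ↥p ↥q)) :=
    (ep.bijective.prodMap eq'.bijective).comp (TensorProduct.prodRight R S S ↥p ↥q).bijective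
  rw [keyfun, ← Function.comp_assoc]
  exact Function.Bijective.of_comp_iff ⇑g hbij

/-- Faithfully flat base change preserves and reflects complementarity of submodules. -/
lemma isCompl_baseChange_iff [Module.FaithfullyFlat R S] (p q : Submodule R E) :
    IsCompl p q ↔ IsCompl (p.baseChange S) (q.baseChange S) := by
  rw [isCompl_iff_bijective_coprod, isCompl_iff_bijective_coprod,
    bijective_baseChange_iff S (p.subtype.coprod q.subtype),
    bijective_baseChange_coprod_iff S p q]

end Aux

/-- Let `R → S` be a faithfully flat ring map and `E` an `R`-module with two finite
decreasing filtrations `F` and `G`. Then `F` and `G` are `n`-opposed on `E`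
(`E = F^p ⊕ G^{q+1}` for all `p + q = n`) if and only if the base-changed filtrations
`S ⊗_R F` and `S ⊗_R G` are `n`-opposed on `S ⊗_R E`. -/
theorem opposed_iff_opposed_baseChange_of_faithfullyFlat
    (R S : Type) [CommRing R] [CommRing S] [Algebra R S] [Module.FaithfullyFlat R S]
    (E : Type) [AddCommGroup E] [Module R E]
    (F G : ℤ → Submodule R E) (hF : Antitone F) (hG : Antitone G)
    (hFtop : ∃ a : ℤ, F a = ⊤) (hFbot : ∃ b : ℤ, F b = ⊥)
    (hGtop : ∃ a : ℤ, G a = ⊤) (hGbot : ∃ b : ℤ, G b = ⊥)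
    (n : ℤ) :
    (∀ p q : ℤ, p + q = n → IsCompl (F p) (G (q + 1))) ↔
      (∀ p q : ℤ, p + q = n →
        IsCompl ((F p).baseChange S) ((G (q + 1)).baseChange S)) := by
  constructor
  · intro h p q hpq
    exact (isCompl_baseChange_iff S (F p) (G (q + 1))).mp (h p q hpq)
  · intro h p q hpq
    exact (isCompl_baseChange_iff S (F p) (G (q + 1))).mpr (h p q hpq)
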